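/- Nonemptiness of the directionally competitive indirect-only region when â·b̂·ĉ ≥ 0 (Theorem 2, case âb̂d̂ < 0, âb̂ĉ ≥ 0): let r₀ > 0 and p₀ > 0 be real numbers. Then for every real r > r₀ there exist real numbers p and q such that p > p₀, q ≥ 0, r·p − p₀·√(r² + 1) ≤ q < r·p, and q ≤ r₀·√(p² + 1). (That is, the region where the a-test and b-test reject while the d-test and the total-effect c-test both fail to reject is nonempty.) -/

import Mathlib

/-- Nonemptiness of the directionally competitive indirect-only region when `â·b̂·ĉ ≥ 0`:
for thresholds `r₀, p₀ > 0` and every `r > r₀`, there exist `p, q` with `p > p₀`, `q ≥ 0`,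
`r·p − p₀·√(r² + 1) ≤ q < r·p`, and `q ≤ r₀·√(p² + 1)`. -/
theorem indirect_only_competitive_region_nonempty_nonneg_c
    (r₀ p₀ : ℝ) (hr₀ : 0 < r₀) (hp₀ : 0 < p₀) :
    ∀ r : ℝ, r₀ < r → ∃ p q : ℝ, p₀ < p ∧ 0 ≤ q ∧
      r * p - p₀ * Real.sqrt (r ^ 2 + 1) ≤ q ∧ q < r * p ∧
      q ≤ r₀ * Real.sqrt (p ^ 2 + 1) := by
  intro r hr
  have hrpos : 0 < r := hr₀.trans hr
  set s := Real.sqrt (r ^ 2 + 1) with hs_def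
  have hs0 : 0 < s := Real.sqrt_pos.mpr (by positivity)
  have hrs : r < s := by
    have := Real.lt_sqrt (le_of_lt hrpos) (y := r ^ 2 + 1)
    exact this.mpr (by linarith)
  have hd : 0 < r - r₀ := sub_pos.mpr hr
  set p := p₀ * s / (r - r₀) with hp_def
  have hp0 : 0 < p := by positivity
  have hppos : p₀ < p := by
    rw [hp_def, lt_div_iff₀ hd]
    have : r - r₀ < s := by linarith
    nlinarith
  have key : (r - r₀) * p = p₀ * s := by
    rw [hp_def]; field_simp [hd.ne']
  refine ⟨p, max 0 (r * p - p₀ * s), hppos, le_max_left _ _, le_max_right _ _, ?_, ?_⟩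
  · apply max_lt
    · positivity
    · nlinarith
  · have hps : p ≤ Real.sqrt (p ^ 2 + 1) := by
      have := Real.le_sqrt (le_of_lt hp0) (y := p ^ 2 + 1)
      exact (this (by positivity)).mpr (by linarith)
    apply max_le
    · positivity
    · have : r * p - p₀ * s = r₀ * p := by nlinarith
      rw [this]
      exact mul_le_mul_of_nonneg_left hps (le_of_lt hr₀)
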